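/- If n is a degree of a faithful transitive permutation representation of the group of the hypermap (3,3,3)_{(s,0)}, then 2n is a degree of the group of the map {6,3}_{(s,0)}. -/

import Mathlib

/-- `G` has a faithful transitive permutation representation of degree `n`. -/
def HasFTPR (G : Type*) [Group G] (n : ℕ) : Prop :=
  ∃ f : G →* Equiv.Perm (Fin n),
    Function.Injective f ∧ ∀ x y : Fin n, ∃ g : G, f g x = y

/-- Relations of the affine Coxeter group of type Ã₂ (three involutory generators,
all pairwise products of order 3), together with one extra relator. -/
def triRels (extra : FreeGroup (Fin 3)) : Set (FreeGroup (Fin 3)) :=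
  {r | ∃ i : Fin 3, r = FreeGroup.of i ^ 2} ∪
  {r | ∃ i j : Fin 3, i ≠ j ∧ r = (FreeGroup.of i * FreeGroup.of j) ^ 3} ∪
  {extra}

/-- The free-group word ρ0 ρ1 ρ2 ρ1 (the translation u). -/
def uWord : FreeGroup (Fin 3) :=
  FreeGroup.of 0 * FreeGroup.of 1 * FreeGroup.of 2 * FreeGroup.of 1

/-- The group of the toroidal hypermap (3,3,3)_{(s,0)}. -/
abbrev Hyp0 (s : ℕ) := PresentedGroup (triRels (uWord ^ s))

/-- The group of the toroidal hypermap (3,3,3)_{(s,s)}. -/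
abbrev HypSS (s : ℕ) :=
  PresentedGroup (triRels ((FreeGroup.of 0 * FreeGroup.of 1 * FreeGroup.of 2) ^ (2 * s)))

/-- Relations of the group of the toroidal map {6,3}_{(s,0)}: the Coxeter group [6,3]
(generators τ0, τ1, τ2 with τi² = (τ0τ1)⁶ = (τ1τ2)³ = (τ0τ2)² = 1) factored by the
normal closure of (τ0τ1τ2)^{2s}. -/
def mapRels (s : ℕ) : Set (FreeGroup (Fin 3)) :=
  {r | ∃ i : Fin 3, r = FreeGroup.of i ^ 2} ∪
  {(FreeGroup.of 0 * FreeGroup.of 1) ^ 6, (FreeGroup.of 1 * FreeGroup.of 2) ^ 3,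
   (FreeGroup.of 0 * FreeGroup.of 2) ^ 2,
   (FreeGroup.of 0 * FreeGroup.of 1 * FreeGroup.of 2) ^ (2 * s)}

/-- The group of the toroidal map {6,3}_{(s,0)}. -/
abbrev Map63 (s : ℕ) := PresentedGroup (mapRels s)

namespace St18

/-- generic: relators are trivial in a presented group -/
lemma rel_eq_one {α : Type*} {rels : Set (FreeGroup α)} {r : FreeGroup α} (h : r ∈ rels) :
    PresentedGroup.mk rels r = 1 :=
  (QuotientGroup.eq_one_iff _).mpr (Subgroup.subset_normalClosure h)

lemma conj_pow_eq_one {M : Type*} [Group M] (w x : M) (n : ℕ) (h : x ^ n = 1) :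
    (w * x * w⁻¹) ^ n = 1 := by
  have hw : w * x * w⁻¹ = MulAut.conj w x := rfl
  rw [hw, ← map_pow, h, map_one]

lemma rev_pow {M : Type*} [Group M] (x y : M) (n : ℕ) (h : (x * y) ^ n = 1) :
    (y * x) ^ n = 1 := by
  have h1 : y * x = y * (x * y) * y⁻¹ := by group
  rw [h1]; exact conj_pow_eq_one _ _ _ h

lemma braid {M : Type*} [Group M] {x y : M} (hx : x * x = 1) (hy : y * y = 1)
    (h : (x * y) ^ 3 = 1) : x * y * x = y * x * y := by
  have h' : (x * y * x) * (y * x * y) = 1 := by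
    have e : (x * y) ^ 3 = (x * y * x) * (y * x * y) := by rw [pow_succ, pow_succ, pow_one]; group
    rw [← e, h]
  have hs : (y * x * y) * (y * x * y) = 1 := by
    calc (y * x * y) * (y * x * y) = y * x * (y * y) * (x * y) := by group
    _ = y * (x * x) * y := by rw [hy]; group
    _ = y * y := by rw [hx]; group
    _ = 1 := hy
  calc x * y * x = ((x * y * x)⁻¹)⁻¹ := (inv_inv _).symm
  _ = (y * x * y)⁻¹ := by rw [inv_eq_of_mul_eq_one_right h']
  _ = y * x * y := inv_eq_of_mul_eq_one_right hs

section Hyp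
variable (s : ℕ)

def a : Hyp0 s := PresentedGroup.of 0
def b : Hyp0 s := PresentedGroup.of 1
def c : Hyp0 s := PresentedGroup.of 2

lemma hyp_gen (i : Fin 3) : (PresentedGroup.of i : Hyp0 s) = PresentedGroup.mk _ (FreeGroup.of i) := rfl

lemma hyp_sq (i : Fin 3) : (PresentedGroup.of i : Hyp0 s) ^ 2 = 1 := by
  rw [hyp_gen, ← map_pow]
  exact rel_eq_one (Or.inl (Or.inl ⟨i, rfl⟩))

lemma hyp_cube (i j : Fin 3) (hij : i ≠ j) :
    ((PresentedGroup.of i : Hyp0 s) * PresentedGroup.of j) ^ 3 = 1 := by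
  rw [hyp_gen, hyp_gen, ← map_mul, ← map_pow]
  exact rel_eq_one (Or.inl (Or.inr ⟨i, j, hij, rfl⟩))

lemma hyp_u : (a s * b s * c s * b s) ^ s = 1 := by
  have : a s * b s * c s * b s = PresentedGroup.mk _ uWord := by
    simp [a, b, c, hyp_gen, uWord, map_mul]
    rfl
  rw [this, ← map_pow]
  exact rel_eq_one (Or.inr rfl)

lemma haa : a s * a s = 1 := by rw [← pow_two]; exact hyp_sq s 0
lemma hbb : b s * b s = 1 := by rw [← pow_two]; exact hyp_sq s 1
lemma hcc : c s * c s = 1 := by rw [← pow_two]; exact hyp_sq s 2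
lemma inv_a : (a s)⁻¹ = a s := inv_eq_of_mul_eq_one_right (haa s)
lemma inv_b : (b s)⁻¹ = b s := inv_eq_of_mul_eq_one_right (hbb s)
lemma inv_c : (c s)⁻¹ = c s := inv_eq_of_mul_eq_one_right (hcc s)

lemma sq_a : a s ^ 2 = 1 := hyp_sq s 0
lemma sq_b : b s ^ 2 = 1 := hyp_sq s 1
lemma sq_c : c s ^ 2 = 1 := hyp_sq s 2
lemma cube_ab : (a s * b s) ^ 3 = 1 := hyp_cube s 0 1 (by decide)
lemma cube_bc : (b s * c s) ^ 3 = 1 := hyp_cube s 1 2 (by decide)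

lemma braid_ac : a s * c s * a s = c s * a s * c s :=
  braid (haa s) (hcc s) (hyp_cube s 0 2 (by decide))
lemma braid_cb : c s * b s * c s = b s * c s * b s :=
  braid (hcc s) (hbb s) (hyp_cube s 2 1 (by decide))

/-- the translation conjugate identity: b a c a = c (a b c b)⁻¹ c⁻¹ -/
lemma hv1_key : b s * a s * c s * a s = c s * (a s * b s * c s * b s)⁻¹ * (c s)⁻¹ := by
  have lhs : b s * a s * c s * a s = b s * (c s * a s * c s) := by
    rw [← braid_ac]; group
  have rhs : c s * (a s * b s * c s * b s)⁻¹ * (c s)⁻¹ = b s * (c s * a s * c s) := by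
    simp only [mul_inv_rev, inv_a, inv_b, inv_c]
    calc c s * (b s * (c s * (b s * a s))) * c s
        = (c s * b s * c s) * (b s * a s * c s) := by group
    _ = (b s * c s * b s) * (b s * a s * c s) := by rw [braid_cb]
    _ = b s * c s * (b s * b s) * (a s * c s) := by group
    _ = b s * (c s * a s * c s) := by rw [hbb]; group
  rw [lhs, rhs]

lemma hv1 : (b s * a s * c s * a s) ^ s = 1 := by
  rw [hv1_key]
  exact conj_pow_eq_one _ _ _ (by rw [inv_pow, hyp_u, inv_one])

lemma hv2 : (a s * c s * b s * c s) ^ s = 1 := by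
  have : a s * c s * b s * c s = a s * b s * c s * b s := by
    calc a s * c s * b s * c s = a s * (c s * b s * c s) := by group
    _ = a s * (b s * c s * b s) := by rw [braid_cb]
    _ = a s * b s * c s * b s := by group
  rw [this]; exact hyp_u s

end Hyp
section Map
variable (s : ℕ)

def t0 : Map63 s := PresentedGroup.of 0
def t1 : Map63 s := PresentedGroup.of 1
def t2 : Map63 s := PresentedGroup.of 2

lemma map_gen (i : Fin 3) : (PresentedGroup.of i : Map63 s) = PresentedGroup.mk _ (FreeGroup.of i) := rfl

lemma map_sq (i : Fin 3) : (PresentedGroup.of i : Map63 s) ^ 2 = 1 := by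
  rw [map_gen, ← map_pow]
  exact rel_eq_one (Or.inl ⟨i, rfl⟩)

lemma m00 : t0 s * t0 s = 1 := by rw [← pow_two]; exact map_sq s 0
lemma m11 : t1 s * t1 s = 1 := by rw [← pow_two]; exact map_sq s 1
lemma m22 : t2 s * t2 s = 1 := by rw [← pow_two]; exact map_sq s 2
lemma inv_t0 : (t0 s)⁻¹ = t0 s := inv_eq_of_mul_eq_one_right (m00 s)
lemma inv_t1 : (t1 s)⁻¹ = t1 s := inv_eq_of_mul_eq_one_right (m11 s)
lemma inv_t2 : (t2 s)⁻¹ = t2 s := inv_eq_of_mul_eq_one_right (m22 s)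

lemma map6 : (t0 s * t1 s) ^ 6 = 1 := by
  have : t0 s * t1 s = PresentedGroup.mk _ (FreeGroup.of 0 * FreeGroup.of 1) := by
    simp [t0, t1, map_gen, map_mul]
  rw [this, ← map_pow]
  exact rel_eq_one (Or.inr (Or.inl rfl))

lemma map3 : (t1 s * t2 s) ^ 3 = 1 := by
  have : t1 s * t2 s = PresentedGroup.mk _ (FreeGroup.of 1 * FreeGroup.of 2) := by
    simp [t1, t2, map_gen, map_mul]
  rw [this, ← map_pow]
  exact rel_eq_one (Or.inr (Or.inr (Or.inl rfl)))

lemma map2 : (t0 s * t2 s) ^ 2 = 1 := by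
  have : t0 s * t2 s = PresentedGroup.mk _ (FreeGroup.of 0 * FreeGroup.of 2) := by
    simp [t0, t2, map_gen, map_mul]
  rw [this, ← map_pow]
  exact rel_eq_one (Or.inr (Or.inr (Or.inr (Or.inl rfl))))

lemma map2s : (t0 s * t1 s * t2 s) ^ (2 * s) = 1 := by
  have : t0 s * t1 s * t2 s = PresentedGroup.mk _ (FreeGroup.of 0 * FreeGroup.of 1 * FreeGroup.of 2) := by
    simp [t0, t1, t2, map_gen, map_mul]
  rw [this, ← map_pow]
  exact rel_eq_one (Or.inr (Or.inr (Or.inr (Or.inr rfl))))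

lemma comm02 : t2 s * t0 s = t0 s * t2 s := by
  have h := map2 s
  rw [pow_two] at h
  calc t2 s * t0 s = (t0 s)⁻¹ * (t0 s * t2 s * (t0 s * t2 s)) * (t2 s)⁻¹ := by group
  _ = (t0 s)⁻¹ * (t2 s)⁻¹ := by rw [h]; group
  _ = t0 s * t2 s := by rw [inv_t0, inv_t2]

lemma braid12 : t2 s * t1 s * t2 s = t1 s * t2 s * t1 s :=
  (braid (m11 s) (m22 s) (map3 s)).symm

/-- τ0τ1τ0 · τ1 τ2 τ1 = (τ0τ1τ2)² -/
lemma key63 : t0 s * t1 s * t0 s * t1 s * t2 s * t1 s = (t0 s * t1 s * t2 s) ^ 2 := by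
  calc t0 s * t1 s * t0 s * t1 s * t2 s * t1 s
      = t0 s * t1 s * t0 s * (t1 s * t2 s * t1 s) := by group
  _ = t0 s * t1 s * t0 s * (t2 s * t1 s * t2 s) := by rw [braid12]
  _ = t0 s * t1 s * (t0 s * t2 s) * (t1 s * t2 s) := by group
  _ = t0 s * t1 s * (t2 s * t0 s) * (t1 s * t2 s) := by rw [comm02]
  _ = (t0 s * t1 s * t2 s) ^ 2 := by rw [pow_two]; group

end Map

section Homs
open SemidirectProduct
variable (s : ℕ)

/-! ### The diagram automorphism σ of `Hyp0 s` (swap ρ0 ↔ ρ1). -/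

def fσ : Fin 3 → Hyp0 s := ![b s, a s, c s]

lemma fσ0 : fσ s 0 = b s := rfl
lemma fσ1 : fσ s 1 = a s := rfl
lemma fσ2 : fσ s 2 = c s := rfl

lemma hσ : ∀ r ∈ triRels (uWord ^ s), FreeGroup.lift (fσ s) r = 1 := by
  rintro r ((⟨i, rfl⟩ | ⟨i, j, hij, rfl⟩) | rfl)
  · simp only [map_pow, FreeGroup.lift_apply_of]
    fin_cases i
    · exact hyp_sq s 1
    · exact hyp_sq s 0
    · exact hyp_sq s 2
  · simp only [map_pow, map_mul, FreeGroup.lift_apply_of]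
    fin_cases i <;> fin_cases j <;>
      first
        | exact absurd rfl hij
        | exact hyp_cube s 1 0 (by decide)
        | exact hyp_cube s 1 2 (by decide)
        | exact hyp_cube s 0 1 (by decide)
        | exact hyp_cube s 0 2 (by decide)
        | exact hyp_cube s 2 1 (by decide)
        | exact hyp_cube s 2 0 (by decide)
  · simp only [uWord, map_pow, map_mul, FreeGroup.lift_apply_of]
    exact hv1 s

def σf : Hyp0 s →* Hyp0 s := PresentedGroup.toGroup (hσ s)

lemma σf_a : σf s (a s) = b s := PresentedGroup.toGroup.of (hσ s)
lemma σf_b : σf s (b s) = a s := PresentedGroup.toGroup.of (hσ s)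
lemma σf_c : σf s (c s) = c s := PresentedGroup.toGroup.of (hσ s)

lemma σf_invol : (σf s).comp (σf s) = MonoidHom.id _ := by
  ext i
  fin_cases i
  · show σf s (σf s (a s)) = a s
    rw [σf_a, σf_b]
  · show σf s (σf s (b s)) = b s
    rw [σf_b, σf_a]
  · show σf s (σf s (c s)) = c s
    rw [σf_c, σf_c]

def σe : Hyp0 s ≃* Hyp0 s :=
  { toFun := σf s, invFun := σf s,
    left_inv := fun x => DFunLike.congr_fun (σf_invol s) x,
    right_inv := fun x => DFunLike.congr_fun (σf_invol s) x,
    map_mul' := map_mul _ }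

lemma σe_sq : σe s * σe s = 1 :=
  MulEquiv.ext fun x => DFunLike.congr_fun (σf_invol s) x

def actHom : ℤˣ →* MulAut (Hyp0 s) where
  toFun u := if u = 1 then 1 else σe s
  map_one' := if_pos rfl
  map_mul' u v := by
    rcases Int.units_eq_one_or u with rfl | rfl <;>
      rcases Int.units_eq_one_or v with rfl | rfl <;>
      simp [(by decide : (-1 : ℤˣ) ≠ 1), (by decide : ((-1 : ℤˣ)) * (-1) = 1), σe_sq]

abbrev Kp := Hyp0 s ⋊[actHom s] ℤˣ

lemma actHom_neg : actHom s (-1) = σe s :=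
  show (if ((-1 : ℤˣ)) = 1 then 1 else σe s) = σe s from if_neg (by decide)

lemma inrneg_mul_inl (x : Hyp0 s) :
    (inr (-1) * inl x : Kp s) = inl (σf s x) * inr (-1) := by
  have h := inl_aut (φ := actHom s) (-1) x
  rw [show ((-1 : ℤˣ))⁻¹ = -1 by decide, actHom_neg] at h
  have h' : (inl (σf s x) : Kp s) = inr (-1) * inl x * inr (-1) := h
  rw [h', mul_assoc, mul_assoc, ← map_mul, show ((-1 : ℤˣ)) * (-1) = 1 by decide,
    map_one, mul_one]

lemma twist_sq (x : Hyp0 s) : (inl x * inr (-1) : Kp s) ^ 2 = inl (x * σf s x) := by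
  rw [pow_two]
  calc (inl x * inr (-1) * (inl x * inr (-1)) : Kp s)
      = inl x * (inr (-1) * inl x) * inr (-1) := by group
  _ = (inl x * (inl (σf s x) * inr (-1)) * inr (-1) : Kp s) := by rw [inrneg_mul_inl]
  _ = ((inl x * inl (σf s x)) * (inr (-1) * inr (-1)) : Kp s) := by group
  _ = (inl (x * σf s x) * inr ((-1) * (-1)) : Kp s) := by rw [← map_mul, ← map_mul]
  _ = inl (x * σf s x) := by
      rw [show ((-1 : ℤˣ)) * (-1) = 1 by decide, map_one, mul_one]

/-! ### ψ : Map63 → Hyp0 ⋊ ℤˣ -/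

def fψ : Fin 3 → Kp s := ![inr (-1), inl (b s), inl (c s)]

lemma hψ : ∀ r ∈ mapRels s, FreeGroup.lift (fψ s) r = 1 := by
  rintro r (⟨i, rfl⟩ | rfl | rfl | rfl | rfl)
  · simp only [map_pow, FreeGroup.lift_apply_of]
    fin_cases i
    · show (inr (-1) : Kp s) ^ 2 = 1
      rw [← map_pow, show ((-1 : ℤˣ)) ^ 2 = 1 by decide, map_one]
    · show (inl (b s) : Kp s) ^ 2 = 1
      rw [← map_pow, sq_b, map_one]
    · show (inl (c s) : Kp s) ^ 2 = 1
      rw [← map_pow, sq_c, map_one]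
  · -- (τ0 τ1)^6
    simp only [map_pow, map_mul, FreeGroup.lift_apply_of]
    show ((fψ s 0) * (fψ s 1)) ^ 6 = 1
    have e1 : (fψ s 0) * (fψ s 1) = inl (a s) * inr (-1) := by
      show (inr (-1) * inl (b s) : Kp s) = _
      rw [inrneg_mul_inl, σf_b]
    rw [e1, show (6 : ℕ) = 2 * 3 from rfl, pow_mul, twist_sq, σf_a, ← map_pow,
      cube_ab, map_one]
  · -- (τ1 τ2)^3
    simp only [map_pow, map_mul, FreeGroup.lift_apply_of]
    show ((fψ s 1) * (fψ s 2)) ^ 3 = 1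
    show ((inl (b s) : Kp s) * inl (c s)) ^ 3 = 1
    rw [← map_mul, ← map_pow, cube_bc, map_one]
  · -- (τ0 τ2)^2
    simp only [map_pow, map_mul, FreeGroup.lift_apply_of]
    show ((fψ s 0) * (fψ s 2)) ^ 2 = 1
    have e1 : (fψ s 0) * (fψ s 2) = inl (c s) * inr (-1) := by
      show (inr (-1) * inl (c s) : Kp s) = _
      rw [inrneg_mul_inl, σf_c]
    rw [e1, twist_sq, σf_c, hcc, map_one]
  · -- (τ0 τ1 τ2)^(2s)
    simp only [map_pow, map_mul, FreeGroup.lift_apply_of]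
    show ((fψ s 0) * (fψ s 1) * (fψ s 2)) ^ (2 * s) = 1
    have e1 : (fψ s 0) * (fψ s 1) * (fψ s 2) = inl (a s * c s) * inr (-1) := by
      show (inr (-1) * inl (b s) * inl (c s) : Kp s) = _
      rw [inrneg_mul_inl, σf_b]
      calc (inl (a s) * inr (-1) * inl (c s) : Kp s)
          = inl (a s) * (inr (-1) * inl (c s)) := by group
      _ = inl (a s) * (inl (σf s (c s)) * inr (-1)) := by rw [inrneg_mul_inl]
      _ = (inl (a s) * inl (c s)) * inr (-1) := by rw [σf_c]; group
      _ = inl (a s * c s) * inr (-1) := by rw [← map_mul]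
    have hσac : σf s (a s * c s) = b s * c s := by rw [map_mul, σf_a, σf_c]
    rw [e1, pow_mul, twist_sq, hσac,
      show a s * c s * (b s * c s) = a s * c s * b s * c s by group,
      ← map_pow, hv2, map_one]

def ψ : Map63 s →* Kp s := PresentedGroup.toGroup (hψ s)

lemma ψ_t0 : ψ s (t0 s) = inr (-1) := PresentedGroup.toGroup.of (hψ s)
lemma ψ_t1 : ψ s (t1 s) = inl (b s) := PresentedGroup.toGroup.of (hψ s)
lemma ψ_t2 : ψ s (t2 s) = inl (c s) := PresentedGroup.toGroup.of (hψ s)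

end Homs

section Homs2
open SemidirectProduct
variable (s : ℕ)

/-! ### φ : Hyp0 → Map63  (ρ0 ↦ τ0τ1τ0, ρ1 ↦ τ1, ρ2 ↦ τ2) -/

def fφ : Fin 3 → Map63 s := ![t0 s * t1 s * t0 s, t1 s, t2 s]

lemma sq010 : (t0 s * t1 s * t0 s) ^ 2 = 1 := by
  rw [pow_two]
  calc t0 s * t1 s * t0 s * (t0 s * t1 s * t0 s)
      = t0 s * t1 s * (t0 s * t0 s) * (t1 s * t0 s) := by group
  _ = t0 s * (t1 s * t1 s) * t0 s := by rw [m00]; group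
  _ = t0 s * t0 s := by rw [m11]; group
  _ = 1 := m00 s

lemma cube010_1 : ((t0 s * t1 s * t0 s) * t1 s) ^ 3 = 1 := by
  have e : (t0 s * t1 s * t0 s) * t1 s = (t0 s * t1 s) ^ 2 := by rw [pow_two]; group
  rw [e, ← pow_mul, show (2 * 3 : ℕ) = 6 from rfl]
  exact map6 s

lemma cube010_2 : ((t0 s * t1 s * t0 s) * t2 s) ^ 3 = 1 := by
  have e : (t0 s * t1 s * t0 s) * t2 s = t0 s * (t1 s * t2 s) * (t0 s)⁻¹ := by
    rw [inv_t0]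
    calc (t0 s * t1 s * t0 s) * t2 s = t0 s * t1 s * (t0 s * t2 s) := by group
    _ = t0 s * t1 s * (t2 s * t0 s) := by rw [comm02]
    _ = t0 s * (t1 s * t2 s) * t0 s := by group
  rw [e]
  exact conj_pow_eq_one _ _ _ (map3 s)

lemma hφ : ∀ r ∈ triRels (uWord ^ s), FreeGroup.lift (fφ s) r = 1 := by
  rintro r ((⟨i, rfl⟩ | ⟨i, j, hij, rfl⟩) | rfl)
  · simp only [map_pow, FreeGroup.lift_apply_of]
    fin_cases i
    · exact sq010 s
    · exact map_sq s 1
    · exact map_sq s 2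
  · simp only [map_pow, map_mul, FreeGroup.lift_apply_of]
    fin_cases i <;> fin_cases j <;>
      first
        | exact absurd rfl hij
        | exact cube010_1 s
        | exact cube010_2 s
        | exact map3 s
        | exact rev_pow _ _ _ (cube010_1 s)
        | exact rev_pow _ _ _ (cube010_2 s)
        | exact rev_pow _ _ _ (map3 s)
  · simp only [uWord, map_pow, map_mul, FreeGroup.lift_apply_of]
    show ((t0 s * t1 s * t0 s) * t1 s * t2 s * t1 s) ^ s = 1
    have e : (t0 s * t1 s * t0 s) * t1 s * t2 s * t1 s = (t0 s * t1 s * t2 s) ^ 2 := key63 s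
    rw [e, ← pow_mul]
    exact map2s s

def φH : Hyp0 s →* Map63 s := PresentedGroup.toGroup (hφ s)

lemma φH_a : φH s (a s) = t0 s * t1 s * t0 s := PresentedGroup.toGroup.of (hφ s)
lemma φH_b : φH s (b s) = t1 s := PresentedGroup.toGroup.of (hφ s)
lemma φH_c : φH s (c s) = t2 s := PresentedGroup.toGroup.of (hφ s)

/-! ### ι : ℤˣ → Map63 -/

def iota : ℤˣ →* Map63 s where
  toFun u := if u = 1 then 1 else t0 s
  map_one' := if_pos rfl
  map_mul' u v := by
    rcases Int.units_eq_one_or u with rfl | rfl <;>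
      rcases Int.units_eq_one_or v with rfl | rfl <;>
      simp [(by decide : (-1 : ℤˣ) ≠ 1), (by decide : ((-1 : ℤˣ)) * (-1) = 1), m00]

lemma iota_neg : iota s (-1) = t0 s :=
  show (if ((-1 : ℤˣ)) = 1 then 1 else t0 s) = t0 s from if_neg (by decide)

lemma hcompat : ∀ g : ℤˣ, (φH s).comp ((actHom s) g).toMonoidHom
    = (MulAut.conj (iota s g)).toMonoidHom.comp (φH s) := by
  intro g
  rcases Int.units_eq_one_or g with rfl | rfl
  · ext i
    simp [MulAut.conj_apply, map_one]
  · ext i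
    have hneg : (actHom s) (-1) = σe s := actHom_neg s
    fin_cases i
    · show φH s (σf s (a s)) = MulAut.conj (iota s (-1)) (φH s (a s))
      rw [σf_a, φH_b, MulAut.conj_apply, iota_neg, φH_a, inv_t0]
      symm
      calc t0 s * (t0 s * t1 s * t0 s) * t0 s
          = (t0 s * t0 s) * t1 s * (t0 s * t0 s) := by group
      _ = t1 s := by rw [m00]; group
    · show φH s (σf s (b s)) = MulAut.conj (iota s (-1)) (φH s (b s))
      rw [σf_b, φH_a, MulAut.conj_apply, iota_neg, φH_b, inv_t0]
    · show φH s (σf s (c s)) = MulAut.conj (iota s (-1)) (φH s (c s))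
      rw [σf_c, φH_c, MulAut.conj_apply, iota_neg, inv_t0]
      symm
      calc t0 s * t2 s * t0 s = t0 s * (t2 s * t0 s) := by group
      _ = t0 s * (t0 s * t2 s) := by rw [comm02]
      _ = (t0 s * t0 s) * t2 s := by group
      _ = t2 s := by rw [m00]; group

def Θ : Kp s →* Map63 s := SemidirectProduct.lift (φH s) (iota s) (hcompat s)

lemma psi_phi : (ψ s).comp (φH s) = inl := by
  refine PresentedGroup.ext fun i => ?_
  fin_cases i
  · show ψ s (φH s (a s)) = inl (a s)
    rw [φH_a, map_mul, map_mul, ψ_t0, ψ_t1, inrneg_mul_inl, σf_b,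
      mul_assoc, ← map_mul, show ((-1:ℤˣ)) * (-1) = 1 by decide, map_one, mul_one]
  · show ψ s (φH s (b s)) = inl (b s)
    rw [φH_b, ψ_t1]
  · show ψ s (φH s (c s)) = inl (c s)
    rw [φH_c, ψ_t2]

lemma phi_inj : Function.Injective (φH s) := by
  have h : Function.Injective ((ψ s).comp (φH s)) := by
    rw [psi_phi]; exact inl_injective
  exact fun x y hxy => h (by simp [MonoidHom.comp_apply, hxy])

lemma theta_psi : (Θ s).comp (ψ s) = MonoidHom.id _ := by
  refine PresentedGroup.ext fun i => ?_
  fin_cases i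
  · show Θ s (ψ s (t0 s)) = t0 s
    rw [ψ_t0]
    show Θ s (inr (-1)) = t0 s
    rw [Θ, SemidirectProduct.lift_inr, iota_neg]
  · show Θ s (ψ s (t1 s)) = t1 s
    rw [ψ_t1]
    show Θ s (inl (b s)) = t1 s
    rw [Θ, SemidirectProduct.lift_inl, φH_b]
  · show Θ s (ψ s (t2 s)) = t2 s
    rw [ψ_t2]
    show Θ s (inl (c s)) = t2 s
    rw [Θ, SemidirectProduct.lift_inl, φH_c]

/-! ### χ : Map63 → ℤˣ and the index-two kernel -/

def chi : Map63 s →* ℤˣ := SemidirectProduct.rightHom.comp (ψ s)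

lemma chi_phi (x : Hyp0 s) : chi s (φH s x) = 1 := by
  have : ψ s (φH s x) = inl x := DFunLike.congr_fun (psi_phi s) x
  simp [chi, MonoidHom.comp_apply, this]

lemma chi_surj : Function.Surjective (chi s) := by
  intro u
  rcases Int.units_eq_one_or u with rfl | rfl
  · exact ⟨1, map_one _⟩
  · exact ⟨t0 s, by simp [chi, MonoidHom.comp_apply, ψ_t0]⟩

lemma mem_ker_chi_iff (k : Map63 s) : chi s k = 1 ↔ ∃ x : Hyp0 s, φH s x = k := by
  constructor
  · intro hk
    refine ⟨(ψ s k).left, ?_⟩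
    have h1 : (ψ s k).right = 1 := hk
    have h2 : ψ s k = inl ((ψ s k).left) := by
      rw [← inl_left_mul_inr_right (ψ s k), h1, map_one, mul_one, left_inl]
    calc φH s ((ψ s k).left) = Θ s (inl ((ψ s k).left)) := by
          rw [Θ, SemidirectProduct.lift_inl]
    _ = Θ s (ψ s k) := by rw [← h2]
    _ = k := DFunLike.congr_fun (theta_psi s) k
  · rintro ⟨x, rfl⟩
    exact chi_phi s x

/-! ### the sign character of Hyp0, to rule out degree 0 -/

def chi2 : Hyp0 s →* ℤˣ :=
  PresentedGroup.toGroup (f := fun _ => (-1 : ℤˣ)) (by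
    rintro r ((⟨i, rfl⟩ | ⟨i, j, hij, rfl⟩) | rfl)
    · simp only [map_pow, FreeGroup.lift_apply_of]; decide
    · simp only [map_pow, map_mul, FreeGroup.lift_apply_of]; decide
    · simp only [uWord, map_pow, map_mul, FreeGroup.lift_apply_of]
      rw [show ((-1 : ℤˣ) * -1 * -1 * -1) = 1 by decide, one_pow])

lemma chi2_a : chi2 s (a s) = -1 := PresentedGroup.toGroup.of _

end Homs2

section Main
open SemidirectProduct

def unitsIntEquivFin2 : ℤˣ ≃ Fin 2 where
  toFun u := if u = 1 then 0 else 1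
  invFun i := if i = 0 then 1 else -1
  left_inv u := by
    rcases Int.units_eq_one_or u with rfl | rfl <;>
      simp [(by decide : (-1 : ℤˣ) ≠ 1)]
  right_inv i := by
    fin_cases i <;> simp [(by decide : (-1 : ℤˣ) ≠ 1)]

variable (s n : ℕ)

lemma main (f : Hyp0 s →* Equiv.Perm (Fin n)) (finj : Function.Injective f)
    (ftran : ∀ x y : Fin n, ∃ g : Hyp0 s, f g x = y) (x0 : Fin n) :
    ∃ F : Map63 s →* Equiv.Perm (Fin (2 * n)),
      Function.Injective F ∧ ∀ x y : Fin (2 * n), ∃ g : Map63 s, F g x = y := by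
  classical
  -- the stabilizer of x0
  let H : Subgroup (Hyp0 s) :=
    { carrier := {g | f g x0 = x0}
      one_mem' := by simp
      mul_mem' := by
        intro g h hg hh
        simp only [Set.mem_setOf_eq, map_mul, Equiv.Perm.mul_apply] at *
        rw [hh, hg]
      inv_mem' := by
        intro g hg
        simp only [Set.mem_setOf_eq] at *
        have h2 : (f g)⁻¹ (f g x0) = x0 := (f g).symm_apply_apply _
        rw [hg] at h2
        show f g⁻¹ x0 = x0
        rw [map_inv]
        exact h2 }
  have memH : ∀ g : Hyp0 s, g ∈ H ↔ f g x0 = x0 := fun g => Iff.rfl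
  let H'' : Subgroup (Map63 s) := H.map (φH s)
  have hle : H'' ≤ (chi s).ker := by
    rintro k ⟨y, hy, rfl⟩
    exact chi_phi s y
  -- E4 : Hyp0 ⧸ H ≃ Fin n
  have wd : ∀ g h : Hyp0 s, @Setoid.r _ (QuotientGroup.leftRel H) g h →
      f g x0 = f h x0 := by
    intro g h hgh
    have h1 : g⁻¹ * h ∈ H := QuotientGroup.leftRel_apply.mp hgh
    have h2 : f (g⁻¹ * h) x0 = x0 := h1
    calc f g x0 = f g (f (g⁻¹ * h) x0) := by rw [h2]
    _ = f (g * (g⁻¹ * h)) x0 := by simp [map_mul]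
    _ = f h x0 := by rw [mul_inv_cancel_left]
  let q4 : Hyp0 s ⧸ H → Fin n := fun z => Quotient.liftOn' z (fun g => f g x0) wd
  have q4bij : Function.Bijective q4 := by
    constructor
    · intro z1 z2 h
      induction z1 using Quotient.inductionOn'
      induction z2 using Quotient.inductionOn'
      rename_i g1 g2
      refine Quotient.sound' (QuotientGroup.leftRel_apply.mpr ?_)
      show f (g1⁻¹ * g2) x0 = x0
      have hq : f g1 x0 = f g2 x0 := h
      calc f (g1⁻¹ * g2) x0 = f g1⁻¹ (f g2 x0) := by simp [map_mul]
      _ = f g1⁻¹ (f g1 x0) := by rw [hq]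
      _ = x0 := by rw [map_inv]; simp
    · intro y
      obtain ⟨g, hg⟩ := ftran x0 y
      exact ⟨Quotient.mk'' g, hg⟩
  let E4 : (Hyp0 s ⧸ H) ≃ Fin n := Equiv.ofBijective q4 q4bij
  -- eG : Hyp0 ≃* ker χ
  let φ0 : Hyp0 s →* (chi s).ker := (φH s).codRestrict _ (fun x => chi_phi s x)
  have φ0bij : Function.Bijective φ0 := by
    constructor
    · intro x y hxy
      exact phi_inj s (congrArg Subtype.val hxy)
    · rintro ⟨k, hk⟩
      obtain ⟨x, hx⟩ := (mem_ker_chi_iff s k).mp hk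
      exact ⟨x, Subtype.ext hx⟩
  let eG : Hyp0 s ≃* (chi s).ker := MulEquiv.ofBijective φ0 φ0bij
  -- E3 : Hyp0 ⧸ H ≃ ker χ ⧸ H''
  have relIff : ∀ g h : Hyp0 s,
      @Setoid.r _ (QuotientGroup.leftRel H) g h ↔
      @Setoid.r _ (QuotientGroup.leftRel (H''.subgroupOf (chi s).ker)) (eG g) (eG h) := by
    intro g h
    rw [QuotientGroup.leftRel_apply, QuotientGroup.leftRel_apply,
      Subgroup.mem_subgroupOf]
    have hcoe : (((eG g)⁻¹ * eG h : (chi s).ker) : Map63 s) = φH s (g⁻¹ * h) := by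
      push_cast
      rw [map_mul, map_inv]
      rfl
    rw [hcoe]
    constructor
    · intro hmem
      exact ⟨g⁻¹ * h, hmem, rfl⟩
    · rintro ⟨y, hy, hEq⟩
      have : y = g⁻¹ * h := phi_inj s hEq
      rwa [this] at hy
  let E3 : (Hyp0 s ⧸ H) ≃ ((chi s).ker ⧸ H''.subgroupOf (chi s).ker) :=
    Quotient.congr eG.toEquiv relIff
  -- E2 : Map63 ⧸ ker χ ≃ ℤˣ
  let E2 : (Map63 s ⧸ (chi s).ker) ≃* ℤˣ :=
    QuotientGroup.quotientKerEquivOfSurjective _ (chi_surj s)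
  -- assemble
  let e : (Map63 s ⧸ H'') ≃ Fin (2 * n) :=
    ((Subgroup.quotientEquivProdOfLE hle).trans
      ((E2.toEquiv.trans unitsIntEquivFin2).prodCongr (E3.symm.trans E4))).trans
      finProdFinEquiv
  -- the permutation representation
  let pC : Equiv.Perm (Map63 s ⧸ H'') →* Equiv.Perm (Fin (2 * n)) :=
    { toFun := fun p => e.permCongr p
      map_one' := by ext x; simp
      map_mul' := by intro p q; ext x; simp }
  let F : Map63 s →* Equiv.Perm (Fin (2 * n)) :=
    pC.comp (MulAction.toPermHom (Map63 s) (Map63 s ⧸ H''))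
  have hF : ∀ (k : Map63 s) (x : Fin (2 * n)), F k x = e (k • e.symm x) := by
    intro k x; rfl
  refine ⟨F, ?_, ?_⟩
  · -- injectivity
    rw [injective_iff_map_eq_one]
    intro k hk
    have hfix : ∀ q : Map63 s ⧸ H'', k • q = q := by
      intro q
      have h1 : F k (e q) = e q := by rw [hk]; rfl
      have h2 : e (k • q) = e q := by
        rw [hF] at h1
        rwa [Equiv.symm_apply_apply] at h1
      exact e.injective h2
    have hmem : k ∈ H'' := by
      have h1 := hfix ((1 : Map63 s) : Map63 s ⧸ H'')
      rw [MulAction.Quotient.smul_mk, QuotientGroup.eq] at h1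
      have : (k • (1 : Map63 s))⁻¹ * 1 ∈ H'' := h1
      simp only [smul_eq_mul, mul_one] at this
      exact (Subgroup.inv_mem_iff H'').mp this
    obtain ⟨y, hy, rfl⟩ := hmem
    have hfixy : ∀ z : Hyp0 s, f y⁻¹ (f z x0) = f z x0 := by
      intro z
      have h1 := hfix ((φH s z : Map63 s) : Map63 s ⧸ H'')
      rw [MulAction.Quotient.smul_mk, QuotientGroup.eq] at h1
      have h2 : (φH s y • φH s z)⁻¹ * φH s z ∈ H'' := h1
      simp only [smul_eq_mul] at h2
      have h3 : φH s (z⁻¹ * y⁻¹ * z) ∈ H'' := by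
        have e1 : φH s (z⁻¹ * y⁻¹ * z) = (φH s y * φH s z)⁻¹ * φH s z := by
          rw [map_mul, map_mul, map_inv, map_inv]
          group
        rw [e1]; exact h2
      obtain ⟨w, hw, hweq⟩ := h3
      have hwz : w = z⁻¹ * y⁻¹ * z := phi_inj s hweq
      rw [hwz] at hw
      have h4 : f (z⁻¹ * y⁻¹ * z) x0 = x0 := hw
      calc f y⁻¹ (f z x0) = f (y⁻¹ * z) x0 := by simp [map_mul]
      _ = f (z * (z⁻¹ * y⁻¹ * z)) x0 := by group
      _ = f z (f (z⁻¹ * y⁻¹ * z) x0) := by simp [map_mul]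
      _ = f z x0 := by rw [h4]
    have hyinv : y⁻¹ = 1 := by
      apply finj
      rw [map_one]
      refine Equiv.ext fun pt => ?_
      obtain ⟨z, hz⟩ := ftran x0 pt
      rw [← hz]
      simpa using hfixy z
    have hyone : y = 1 := by rwa [inv_eq_one] at hyinv
    rw [hyone, map_one]
  · -- transitivity
    intro x y
    obtain ⟨k1, hk1⟩ := QuotientGroup.mk_surjective (e.symm x)
    obtain ⟨k2, hk2⟩ := QuotientGroup.mk_surjective (e.symm y)
    refine ⟨k2 * k1⁻¹, ?_⟩
    rw [hF, ← hk1]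
    have : (k2 * k1⁻¹) • (QuotientGroup.mk k1 : Map63 s ⧸ H'') = QuotientGroup.mk k2 := by
      rw [MulAction.Quotient.smul_mk]
      congr 1
      simp [smul_eq_mul]
    rw [this, hk2, Equiv.apply_symm_apply]

end Main

end St18

/-- If `n` is a degree of the group of the hypermap (3,3,3)_{(s,0)}, then `2n` is a degree
of the group of the map {6,3}_{(s,0)}. -/



theorem stmt18 (s n : ℕ) (hs : 2 ≤ s) (h : HasFTPR (Hyp0 s) n) :
    HasFTPR (Map63 s) (2 * n) := by
  obtain ⟨f, finj, ftran⟩ := h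
  rcases Nat.eq_zero_or_pos n with rfl | hn
  · exfalso
    have h1 : f (St18.a s) = f 1 := Equiv.ext fun x => x.elim0
    have h2 : St18.a s = 1 := finj h1
    have h3 := congrArg (St18.chi2 s) h2
    rw [St18.chi2_a, map_one] at h3
    exact absurd h3 (by decide)
  · obtain ⟨F, hF1, hF2⟩ := St18.main s n f finj ftran ⟨0, hn⟩
    exact ⟨F, hF1, hF2⟩
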